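/- Explicit formula for the three-path case: with a = 1, b = 1, c = 2, the function F_{1,1,2}(x_1,x_2,x_3 | y_1,y_2,y_3), defined as the sum of weights of all pairs of vertex-disjoint Up-Right paths γ_1 : (2,1) → (1,3) and γ_2 : (3,1) → (2,3) in the 3×3 grid (weight = product of 1/(x_i+y_j) over visited cells), equals [(x_1+y_1) + (x_2+y_2) + (x_3+y_3)] · ∏_{i=1}^{3} ∏_{j=1}^{3} 1/(x_i+y_j). -/

import Mathlib

open Finset

noncomputable section

/-- The field of rational functions over `ℚ` in variables `x_1, x_2, …` and `y_1, y_2, …`. -/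
abbrev K : Type := FractionRing (MvPolynomial (ℕ ⊕ ℕ) ℚ)

/-- The variable `x_i` as an element of `K`. -/
def X (i : ℕ) : K := algebraMap (MvPolynomial (ℕ ⊕ ℕ) ℚ) K (MvPolynomial.X (Sum.inl i))

/-- The variable `y_j` as an element of `K`. -/
def Y (j : ℕ) : K := algebraMap (MvPolynomial (ℕ ⊕ ℕ) ℚ) K (MvPolynomial.X (Sum.inr j))

/-- A step of an Up-Right lattice path: `Up` decreases the first (row) coordinate by one,
`Right` increases the second (column) coordinate by one. -/
def Step (c d : ℕ × ℕ) : Prop :=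
  (d.1 + 1 = c.1 ∧ d.2 = c.2) ∨ (d.1 = c.1 ∧ d.2 = c.2 + 1)

/-- `p` is an Up-Right lattice path from cell `A` to cell `B` (listed as its sequence of
visited cells, starting at `A` and ending at `B`). -/
def IsPath (A B : ℕ × ℕ) (p : List (ℕ × ℕ)) : Prop :=
  p.Chain' Step ∧ p.head? = some A ∧ p.getLast? = some B

/-- All cells of `p` lie in the grid `{1,…,m} × {1,…,n}`. -/
def InGrid (m n : ℕ) (p : List (ℕ × ℕ)) : Prop :=
  ∀ c ∈ p, 1 ≤ c.1 ∧ c.1 ≤ m ∧ 1 ≤ c.2 ∧ c.2 ≤ n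

instance (c d : ℕ × ℕ) : Decidable (Step c d) :=
  inferInstanceAs (Decidable ((d.1 + 1 = c.1 ∧ d.2 = c.2) ∨ (d.1 = c.1 ∧ d.2 = c.2 + 1)))
instance (A B : ℕ × ℕ) (p : List (ℕ × ℕ)) : Decidable (IsPath A B p) :=
  inferInstanceAs (Decidable (p.IsChain Step ∧ p.head? = some A ∧ p.getLast? = some B))
instance (m n : ℕ) (p : List (ℕ × ℕ)) : Decidable (InGrid m n p) :=
  inferInstanceAs (Decidable (∀ c ∈ p, 1 ≤ c.1 ∧ c.1 ≤ m ∧ 1 ≤ c.2 ∧ c.2 ≤ n))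

lemma len_lemma : ∀ (p : List (ℕ × ℕ)) (a b : ℕ × ℕ), p.Chain' Step →
    p.head? = some a → p.getLast? = some b → b.2 + a.1 + 1 = a.2 + b.1 + p.length := by
  intro p
  induction p with
  | nil => intro a b _ h; simp at h
  | cons x q ih =>
    intro a b hc hh hl
    simp at hh; subst hh
    match q, hc, hl with
    | [], _, hl => simp at hl; subst hl; simp
    | c :: q', hc, hl =>
      rw [List.Chain', List.isChain_cons_cons] at hc
      have hl' : (c :: q').getLast? = some b := by
        rw [List.getLast?_cons_cons] at hl
        exact hl
      have := ih c b hc.2 (by simp) hl'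
      simp only [List.length_cons] at this ⊢
      rcases hc.1 with ⟨h1, h2⟩ | ⟨h1, h2⟩ <;> omega

lemma class1 (p : List (ℕ × ℕ)) (h : IsPath (2,1) (1,3) p) :
    p = [(2,1),(1,1),(1,2),(1,3)] ∨ p = [(2,1),(2,2),(1,2),(1,3)] ∨
      p = [(2,1),(2,2),(2,3),(1,3)] := by
  obtain ⟨hc, hh, hl⟩ := h
  have hlen : p.length = 4 := by
    have := len_lemma p (2,1) (1,3) hc hh hl
    simp at this; omega
  rcases p with _ | ⟨c0, _ | ⟨c1, _ | ⟨c2, _ | ⟨c3, _ | ⟨c4, t⟩⟩⟩⟩⟩ <;>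
    try (exfalso; simp at hlen <;> omega)
  simp at hh hl
  subst hh; subst hl
  obtain ⟨u1, v1⟩ := c1; obtain ⟨u2, v2⟩ := c2
  simp only [List.Chain', List.isChain_cons_cons, List.isChain_singleton, and_true, Step] at hc
  simp only [List.cons.injEq, Prod.mk.injEq, and_true, true_and]
  omega

lemma class2 (p : List (ℕ × ℕ)) (h : IsPath (3,1) (2,3) p) :
    p = [(3,1),(2,1),(2,2),(2,3)] ∨ p = [(3,1),(3,2),(2,2),(2,3)] ∨
      p = [(3,1),(3,2),(3,3),(2,3)] := by
  obtain ⟨hc, hh, hl⟩ := h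
  have hlen : p.length = 4 := by
    have := len_lemma p (3,1) (2,3) hc hh hl
    simp at this; omega
  rcases p with _ | ⟨c0, _ | ⟨c1, _ | ⟨c2, _ | ⟨c3, _ | ⟨c4, t⟩⟩⟩⟩⟩ <;>
    try (exfalso; simp at hlen <;> omega)
  simp at hh hl
  subst hh; subst hl
  obtain ⟨u1, v1⟩ := c1; obtain ⟨u2, v2⟩ := c2
  simp only [List.Chain', List.isChain_cons_cons, List.isChain_singleton, and_true, Step] at hc
  simp only [List.cons.injEq, Prod.mk.injEq, and_true, true_and]
  omega

/-- The weight of a path: the product of `1/(x_i + y_j)` over all visited cells `(i,j)`. -/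
def pathWeight (x y : ℕ → K) (p : List (ℕ × ℕ)) : K :=
  (p.map fun c => (x c.1 + y c.2)⁻¹).prod

/-- The single-path partition function: the sum of weights of all Up-Right lattice paths
from `A` to `B` inside the grid `{1,…,m} × {1,…,n}`. -/
def F1 (m n : ℕ) (x y : ℕ → K) (A B : ℕ × ℕ) : K :=
  ∑ᶠ p : {p : List (ℕ × ℕ) // IsPath A B p ∧ InGrid m n p}, pathWeight x y p.1

/-- `γ` is a `k`-tuple of pairwise vertex-disjoint Up-Right lattice paths `γ i : A i → B i`
inside the grid `{1,…,m} × {1,…,n}`. -/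
def IsTuple (m n k : ℕ) (A B : Fin k → ℕ × ℕ) (γ : Fin k → List (ℕ × ℕ)) : Prop :=
  (∀ i, IsPath (A i) (B i) (γ i) ∧ InGrid m n (γ i)) ∧
  (∀ i j, i ≠ j → ∀ c ∈ γ i, c ∉ γ j)

instance (m n k : ℕ) (A B : Fin k → ℕ × ℕ) (γ : Fin k → List (ℕ × ℕ)) :
    Decidable (IsTuple m n k A B γ) :=
  inferInstanceAs (Decidable ((∀ i, IsPath (A i) (B i) (γ i) ∧ InGrid m n (γ i)) ∧
    (∀ i j, i ≠ j → ∀ c ∈ γ i, c ∉ γ j)))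

def T1 : Fin 2 → List (ℕ × ℕ) := ![[(2,1),(1,1),(1,2),(1,3)], [(3,1),(3,2),(2,2),(2,3)]]
def T2 : Fin 2 → List (ℕ × ℕ) := ![[(2,1),(1,1),(1,2),(1,3)], [(3,1),(3,2),(3,3),(2,3)]]
def T3 : Fin 2 → List (ℕ × ℕ) := ![[(2,1),(2,2),(1,2),(1,3)], [(3,1),(3,2),(3,3),(2,3)]]

lemma tuple_class (γ : Fin 2 → List (ℕ × ℕ))
    (h : IsTuple 3 3 2 (fun i => ((i : ℕ) + 2, 1)) (fun i => ((i : ℕ) + 1, 3)) γ) :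
    γ = T1 ∨ γ = T2 ∨ γ = T3 := by
  have h0 : IsPath (2,1) (1,3) (γ 0) := (h.1 0).1
  have h1 : IsPath (3,1) (2,3) (γ 1) := (h.1 1).1
  have hd : ∀ c ∈ γ 0, c ∉ γ 1 := h.2 0 1 (by decide)
  have e0 := class1 (γ 0) h0
  have e1 := class2 (γ 1) h1
  have key : ∀ i : Fin 2, γ i = T1 i ∨ (γ 0 = T1 0 ∧ γ 1 = T2 1) ∨
      (γ 0 = T3 0 ∧ γ 1 = T3 1) → True := fun _ _ => trivial
  rcases e0 with e0 | e0 | e0 <;> rcases e1 with e1 | e1 | e1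
  · exact absurd (hd (2,1) (by rw [e0]; simp)) (by rw [e1]; simp)
  · refine Or.inl ?_
    funext i; fin_cases i
    · simpa [T1] using e0
    · simpa [T1] using e1
  · refine Or.inr (Or.inl ?_)
    funext i; fin_cases i
    · simpa [T2] using e0
    · simpa [T2] using e1
  · exact absurd (hd (2,1) (by rw [e0]; simp)) (by rw [e1]; simp)
  · exact absurd (hd (2,2) (by rw [e0]; simp)) (by rw [e1]; simp)
  · refine Or.inr (Or.inr ?_)
    funext i; fin_cases i
    · simpa [T3] using e0
    · simpa [T3] using e1
  · exact absurd (hd (2,1) (by rw [e0]; simp)) (by rw [e1]; simp)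
  · exact absurd (hd (2,2) (by rw [e0]; simp)) (by rw [e1]; simp)
  · exact absurd (hd (2,3) (by rw [e0]; simp)) (by rw [e1]; simp)

lemma tuple_T1 : IsTuple 3 3 2 (fun i => ((i : ℕ) + 2, 1)) (fun i => ((i : ℕ) + 1, 3)) T1 := by
  refine ⟨fun i => ?_, fun i j hij => ?_⟩
  · fin_cases i <;>
      exact ⟨⟨by norm_num [T1, Step, List.Chain', List.isChain_cons_cons, Matrix.cons_val_zero,
        Matrix.cons_val_one, Matrix.head_cons], rfl, rfl⟩, by decide⟩
  · fin_cases i <;> fin_cases j <;> first | exact absurd rfl hij | decide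
lemma tuple_T2 : IsTuple 3 3 2 (fun i => ((i : ℕ) + 2, 1)) (fun i => ((i : ℕ) + 1, 3)) T2 := by
  refine ⟨fun i => ?_, fun i j hij => ?_⟩
  · fin_cases i <;>
      exact ⟨⟨by norm_num [T2, Step, List.Chain', List.isChain_cons_cons, Matrix.cons_val_zero,
        Matrix.cons_val_one, Matrix.head_cons], rfl, rfl⟩, by decide⟩
  · fin_cases i <;> fin_cases j <;> first | exact absurd rfl hij | decide
lemma tuple_T3 : IsTuple 3 3 2 (fun i => ((i : ℕ) + 2, 1)) (fun i => ((i : ℕ) + 1, 3)) T3 := by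
  refine ⟨fun i => ?_, fun i j hij => ?_⟩
  · fin_cases i <;>
      exact ⟨⟨by norm_num [T3, Step, List.Chain', List.isChain_cons_cons, Matrix.cons_val_zero,
        Matrix.cons_val_one, Matrix.head_cons], rfl, rfl⟩, by decide⟩
  · fin_cases i <;> fin_cases j <;> first | exact absurd rfl hij | decide

/-- The multi-path partition function: the sum, over all `k`-tuples of pairwise disjoint
Up-Right lattice paths `γ i : A i → B i` in the grid `{1,…,m} × {1,…,n}`, of the product
of `1/(x_i + y_j)` over all visited cells. -/
def Ftuple (m n k : ℕ) (x y : ℕ → K) (A B : Fin k → ℕ × ℕ) : K :=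
  ∑ᶠ γ : {γ : Fin k → List (ℕ × ℕ) // IsTuple m n k A B γ}, ∏ i, pathWeight x y (γ.1 i)

lemma XY_ne (i j : ℕ) : X i + Y j ≠ 0 := by
  have : X i + Y j = algebraMap (MvPolynomial (ℕ ⊕ ℕ) ℚ) K
      (MvPolynomial.X (Sum.inl i) + MvPolynomial.X (Sum.inr j)) := by
    rw [map_add]; rfl
  rw [this]
  intro hzero
  have h0 : (MvPolynomial.X (Sum.inl i) + MvPolynomial.X (Sum.inr j) :
      MvPolynomial (ℕ ⊕ ℕ) ℚ) = 0 := by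
    apply IsFractionRing.injective (MvPolynomial (ℕ ⊕ ℕ) ℚ) K
    rw [hzero, map_zero]
  have := congrArg (MvPolynomial.coeff (Finsupp.single (Sum.inl i) 1)) h0
  simp [MvPolynomial.coeff_add, MvPolynomial.coeff_X', Finsupp.single_eq_single_iff] at this

set_option maxHeartbeats 2000000 in

set_option maxHeartbeats 2000000 in
/-- Explicit formula in the case `a = 1`, `b = 1`, `c = 2`: the sum of weights of all
pairs of vertex-disjoint Up-Right paths `γ_1 : (2,1) → (1,3)`, `γ_2 : (3,1) → (2,3)` in
the `3×3` grid equals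
`[(x_1+y_1) + (x_2+y_2) + (x_3+y_3)] · ∏_{i=1}^3 ∏_{j=1}^3 1/(x_i+y_j)`. -/
theorem stmt15 :
    Ftuple 3 3 2 X Y (fun i => ((i : ℕ) + 2, 1)) (fun i => ((i : ℕ) + 1, 3)) =
      ((X 1 + Y 1) + (X 2 + Y 2) + (X 3 + Y 3)) *
        ∏ i ∈ Finset.Icc 1 3, ∏ j ∈ Finset.Icc 1 3, (X i + Y j)⁻¹ := by
  classical
  have h12 : T1 ≠ T2 := fun h => absurd (congrFun h 1) (by decide)
  have h13 : T1 ≠ T3 := fun h => absurd (congrFun h 0) (by decide)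
  have h23 : T2 ≠ T3 := fun h => absurd (congrFun h 0) (by decide)
  have hset : {γ : Fin 2 → List (ℕ × ℕ) |
      IsTuple 3 3 2 (fun i => ((i : ℕ) + 2, 1)) (fun i => ((i : ℕ) + 1, 3)) γ} =
      (({T1, T2, T3} : Finset (Fin 2 → List (ℕ × ℕ))) : Set (Fin 2 → List (ℕ × ℕ))) := by
    ext γ
    simp only [Set.mem_setOf_eq, Finset.coe_insert, Set.mem_insert_iff, Finset.coe_singleton,
      Set.mem_singleton_iff]
    constructor
    · exact tuple_class γ
    · rintro (rfl | rfl | rfl)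
      exacts [tuple_T1, tuple_T2, tuple_T3]
  have step1 : Ftuple 3 3 2 X Y (fun i => ((i : ℕ) + 2, 1)) (fun i => ((i : ℕ) + 1, 3)) =
      ∑ᶠ γ ∈ {γ : Fin 2 → List (ℕ × ℕ) |
        IsTuple 3 3 2 (fun i => ((i : ℕ) + 2, 1)) (fun i => ((i : ℕ) + 1, 3)) γ},
        ∏ i, pathWeight X Y (γ i) := by
    rw [Ftuple]
    exact finsum_set_coe_eq_finsum_mem (f := fun γ : Fin 2 → List (ℕ × ℕ) => ∏ i, pathWeight X Y (γ i)) _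
  rw [step1, hset, finsum_mem_coe_finset]
  rw [Finset.sum_insert (by simp [h12, h13]), Finset.sum_insert (by simp [h23]),
    Finset.sum_singleton]
  have e1 : (∏ i, pathWeight X Y (T1 i)) =
      (X 2 + Y 1)⁻¹ * (X 1 + Y 1)⁻¹ * (X 1 + Y 2)⁻¹ * (X 1 + Y 3)⁻¹ *
      ((X 3 + Y 1)⁻¹ * (X 3 + Y 2)⁻¹ * (X 2 + Y 2)⁻¹ * (X 2 + Y 3)⁻¹) := by
    simp [T1, pathWeight, Fin.prod_univ_two]
    ring
  have e2 : (∏ i, pathWeight X Y (T2 i)) =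
      (X 2 + Y 1)⁻¹ * (X 1 + Y 1)⁻¹ * (X 1 + Y 2)⁻¹ * (X 1 + Y 3)⁻¹ *
      ((X 3 + Y 1)⁻¹ * (X 3 + Y 2)⁻¹ * (X 3 + Y 3)⁻¹ * (X 2 + Y 3)⁻¹) := by
    simp [T2, pathWeight, Fin.prod_univ_two]
    ring
  have e3 : (∏ i, pathWeight X Y (T3 i)) =
      (X 2 + Y 1)⁻¹ * (X 2 + Y 2)⁻¹ * (X 1 + Y 2)⁻¹ * (X 1 + Y 3)⁻¹ *
      ((X 3 + Y 1)⁻¹ * (X 3 + Y 2)⁻¹ * (X 3 + Y 3)⁻¹ * (X 2 + Y 3)⁻¹) := by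
    simp [T3, pathWeight, Fin.prod_univ_two]
    ring
  rw [e1, e2, e3]
  rw [show (Finset.Icc 1 3 : Finset ℕ) = {1, 2, 3} from by decide]
  norm_num [Finset.prod_insert, Finset.mem_insert, Finset.mem_singleton, Finset.prod_singleton]
  linear_combination
    (-((X 2 + Y 1)⁻¹ * (X 1 + Y 1)⁻¹ * (X 1 + Y 2)⁻¹ * (X 1 + Y 3)⁻¹ *
      ((X 3 + Y 1)⁻¹ * (X 3 + Y 2)⁻¹ * (X 2 + Y 2)⁻¹ * (X 2 + Y 3)⁻¹))) *
        mul_inv_cancel₀ (XY_ne 3 3) +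
    (-((X 2 + Y 1)⁻¹ * (X 1 + Y 1)⁻¹ * (X 1 + Y 2)⁻¹ * (X 1 + Y 3)⁻¹ *
      ((X 3 + Y 1)⁻¹ * (X 3 + Y 2)⁻¹ * (X 3 + Y 3)⁻¹ * (X 2 + Y 3)⁻¹))) *
        mul_inv_cancel₀ (XY_ne 2 2) +
    (-((X 2 + Y 1)⁻¹ * (X 2 + Y 2)⁻¹ * (X 1 + Y 2)⁻¹ * (X 1 + Y 3)⁻¹ *
      ((X 3 + Y 1)⁻¹ * (X 3 + Y 2)⁻¹ * (X 3 + Y 3)⁻¹ * (X 2 + Y 3)⁻¹))) *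
        mul_inv_cancel₀ (XY_ne 1 1)
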